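/- Let S ⊆ H with |S| > 1 and h_0 ∈ S with π_S(h_0) > 1/2. In the greedy subtree T^g_S, let q_0, …, q_{D−1} with costs c_0, …, c_{D−1} be the questions asked along the root-to-h_0 path, let C_d = Σ_{i=0}^{d−1} c_i (with C_0 = 0), let R_0 = S \ {h_0}, and for d > 0 let R_d = R_{d−1} \ {h : q_{d−1}(h) ≠ q_{d−1}(h_0)}. Then for every 0 ≤ d < D, π(R_d) ≤ π(R_0) · exp( −C_d / (2 · C*(h_0)) ), where C*(h_0) is the cost of identifying h_0 in any query tree T* whose leaves contain S. -/
import Mathlib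


open Finset

namespace ActiveLearning

variable {H A : Type*} {m : ℕ}

/-- The total mass of a weight function `v` on a finite set `S`. -/
def mass (v : H → ℝ) (S : Finset H) : ℝ := ∑ s ∈ S, v s

/-- `v` restricted to `S` and normalized. -/
noncomputable def restrict [DecidableEq H] (v : H → ℝ) (S : Finset H) : H → ℝ :=
  fun h => if h ∈ S then v h / mass v S else 0

/-- The shrinkage `Δ` of a question `qi` on `(S, v)`. -/
noncomputable def shrink [Fintype A] [DecidableEq A] (qi : H → A)
    (S : Finset H) (v : H → ℝ) : ℝ :=
  mass v S - ∑ j : A, (mass v (S.filter fun s => qi s = j)) ^ 2 / mass v S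

/-- The collision probability of a distribution `v`. -/
def CP [Fintype H] (v : H → ℝ) : ℝ := ∑ z : H, (v z) ^ 2

/-- Query trees: internal nodes are questions (indexed by `Fin m`), branches are answers,
leaves are hypotheses. -/
inductive QTree (m : ℕ) (H A : Type*) : Type _
  | leaf : H → QTree m H A
  | node : Fin m → (A → QTree m H A) → QTree m H A

/-- Follow the answers of hypothesis `h` down the tree, returning the leaf reached. -/
def follow (q : Fin m → H → A) : QTree m H A → H → H
  | .leaf h', _ => h'
  | .node i ch, h => follow q (ch (q i h)) h

/-- The cost `c_T(h)`: sum of costs of the questions on the root-to-`h` path. -/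
def pathCost (q : Fin m → H → A) (c : Fin m → ℝ) : QTree m H A → H → ℝ
  | .leaf _, _ => 0
  | .node i ch, h => c i + pathCost q c (ch (q i h)) h

/-- The leaves of `T` include `S`: every `h ∈ S` is identified by `T`. -/
def ValidOn (q : Fin m → H → A) (T : QTree m H A) (S : Finset H) : Prop :=
  ∀ h ∈ S, follow q T h = h

/-- The expected cost `C(T, v)` of a query tree `T` under weights `v`. -/
noncomputable def treeCost [Fintype H] (q : Fin m → H → A) (c : Fin m → ℝ)
    (T : QTree m H A) (v : H → ℝ) : ℝ :=
  ∑ h : H, v h * pathCost q c T h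

/-- The questions asked along the root-to-`h` path. -/
def pathQs (q : Fin m → H → A) : QTree m H A → H → List (Fin m)
  | .leaf _, _ => []
  | .node i ch, h => i :: pathQs q (ch (q i h)) h

/-- `T` is a greedy query tree for `π` on version space `S`: at every node it asks a question
maximizing the shrinkage-cost ratio and recurses on each nonempty answer class. -/
inductive IsGreedy [Fintype A] [DecidableEq A] [DecidableEq H]
    (q : Fin m → H → A) (c : Fin m → ℝ) (π : H → ℝ) :
    QTree m H A → Finset H → Prop
  | leaf (h : H) : IsGreedy q c π (.leaf h) {h}
  | node (S : Finset H) (i : Fin m) (ch : A → QTree m H A)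
      (hcard : 1 < S.card)
      (hmax : ∀ j : Fin m,
        shrink (q j) S (restrict π S) / c j ≤ shrink (q i) S (restrict π S) / c i)
      (hch : ∀ a : A, (S.filter fun s => q i s = a).Nonempty →
        IsGreedy q c π (ch a) (S.filter fun s => q i s = a)) :
      IsGreedy q c π (.node i ch) S

/-- `T` is an `ε`-approximate greedy query tree for `π` on version space `S`. -/
inductive IsApproxGreedy [Fintype A] [DecidableEq A] [DecidableEq H]
    (ε : ℝ) (q : Fin m → H → A) (c : Fin m → ℝ) (π : H → ℝ) :
    QTree m H A → Finset H → Prop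
  | leaf (h : H) : IsApproxGreedy ε q c π (.leaf h) {h}
  | node (S : Finset H) (i : Fin m) (ch : A → QTree m H A)
      (hcard : 1 < S.card)
      (happrox : ∀ j : Fin m,
        (1 - ε) * (shrink (q j) S (restrict π S) / c j) ≤
          shrink (q i) S (restrict π S) / c i)
      (hch : ∀ a : A, (S.filter fun s => q i s = a).Nonempty →
        IsApproxGreedy ε q c π (ch a) (S.filter fun s => q i s = a)) :
      IsApproxGreedy ε q c π (.node i ch) S

/-- `T` is irreducible on version space `S`: every asked question strictly splits the
surviving set. -/
inductive Irreducible [DecidableEq A] (q : Fin m → H → A) :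
    QTree m H A → Finset H → Prop
  | leaf (h : H) (S : Finset H) : Irreducible q (.leaf h) S
  | node (S : Finset H) (i : Fin m) (ch : A → QTree m H A)
      (hsplit : ∃ s ∈ S, ∃ t ∈ S, q i s ≠ q i t)
      (hch : ∀ a : A, (S.filter fun s => q i s = a).Nonempty →
        Irreducible q (ch a) (S.filter fun s => q i s = a)) :
      Irreducible q (.node i ch) S



section Aux

set_option linter.unusedSectionVars false

variable [Fintype A] [DecidableEq A] [DecidableEq H]

lemma mass_nonneg (π : H → ℝ) (hπ : ∀ h, 0 < π h) (T : Finset H) : 0 ≤ mass π T :=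
  Finset.sum_nonneg fun h _ => (hπ h).le

lemma mass_mono (π : H → ℝ) (hπ : ∀ h, 0 < π h) {T U : Finset H} (hTU : T ⊆ U) :
    mass π T ≤ mass π U :=
  Finset.sum_le_sum_of_subset_of_nonneg hTU fun h _ _ => (hπ h).le

lemma mass_pos (π : H → ℝ) (hπ : ∀ h, 0 < π h) {T : Finset H} (hT : T.Nonempty) :
    0 < mass π T :=
  Finset.sum_pos (fun h _ => hπ h) hT

lemma mass_restrict (π : H → ℝ) (S T : Finset H) (hTS : T ⊆ S) :
    mass (restrict π S) T = mass π T / mass π S := by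
  unfold mass restrict
  rw [Finset.sum_div]
  exact Finset.sum_congr rfl fun t ht => if_pos (hTS ht)

lemma shrink_restrict_eq (π : H → ℝ) (hπ : ∀ h, 0 < π h) (S : Finset H) (hS : S.Nonempty)
    (f : H → A) :
    shrink f S (restrict π S) =
      1 - (∑ a : A, (mass π (S.filter fun s => f s = a)) ^ 2) / (mass π S) ^ 2 := by
  have hM : (0:ℝ) < mass π S := mass_pos π hπ hS
  unfold shrink
  rw [mass_restrict π S S (le_refl _), div_self hM.ne']
  have : ∀ a : A, (mass (restrict π S) (S.filter fun s => f s = a)) ^ 2 / 1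
      = (mass π (S.filter fun s => f s = a)) ^ 2 / (mass π S) ^ 2 := by
    intro a
    rw [mass_restrict π S _ (Finset.filter_subset _ _), div_one, div_pow]
  rw [Finset.sum_congr rfl fun a _ => this a, ← Finset.sum_div]

lemma list_sum_lt_of_forall_lt {ι : Type*} (f g : ι → ℝ) :
    ∀ (L : List ι), L ≠ [] → (∀ j ∈ L, f j < g j) →
      (L.map f).sum < (L.map g).sum := by
  intro L
  induction L with
  | nil => intro h; exact absurd rfl h
  | cons j L ih =>
    intro _ h
    simp only [List.map_cons, List.sum_cons]
    rcases eq_or_ne L [] with rfl | hL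
    · simpa using h j (by simp)
    · exact add_lt_add (h j (by simp)) (ih hL fun x hx => h x (by simp [hx]))

lemma cover_sum (π : H → ℝ) (hπ : ∀ h, 0 < π h) (q : Fin m → H → A) (h0 : H)
    (S : Finset H) :
    ∀ (L : List (Fin m)) (T : Finset H), T ⊆ S →
      (∀ r ∈ T, ∃ j ∈ L, q j r ≠ q j h0) →
      mass π T ≤ (L.map fun j => mass π (S.filter fun s => ¬ q j s = q j h0)).sum := by
  intro L
  induction L with
  | nil =>
    intro T _ hcov
    have : T = ∅ := Finset.eq_empty_of_forall_notMem fun r hr => by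
      obtain ⟨j, hj, _⟩ := hcov r hr; simp at hj
    simp [this, mass]
  | cons j L ih =>
    intro T hTS hcov
    simp only [List.map_cons, List.sum_cons]
    have hsplit : mass π (T.filter fun s => ¬ q j s = q j h0)
        + mass π (T.filter fun s => q j s = q j h0) = mass π T := by
      unfold mass
      rw [add_comm]
      exact Finset.sum_filter_add_sum_filter_not T _ π
    have h1 : mass π (T.filter fun s => ¬ q j s = q j h0)
        ≤ mass π (S.filter fun s => ¬ q j s = q j h0) :=
      mass_mono π hπ (Finset.monotone_filter_left _ hTS)
    have h2 : mass π (T.filter fun s => q j s = q j h0)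
        ≤ (L.map fun j => mass π (S.filter fun s => ¬ q j s = q j h0)).sum := by
      apply ih _ ((Finset.filter_subset _ _).trans hTS)
      intro r hr
      rw [Finset.mem_filter] at hr
      obtain ⟨j', hj', hne⟩ := hcov r hr.1
      rcases List.mem_cons.mp hj' with rfl | hmem
      · exact absurd hr.2 hne
      · exact ⟨j', hmem, hne⟩
    linarith

set_option maxHeartbeats 1000000 in
/-- The core single-step shrinkage argument. -/
lemma one_step (π : H → ℝ) (hπpos : ∀ h, 0 < π h)
    (q : Fin m → H → A) (c : Fin m → ℝ) (hc : ∀ i, 0 < c i)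
    (Cs : ℝ) (hCs : 0 < Cs) (L : List (Fin m)) (hL : (L.map c).sum ≤ Cs)
    (S : Finset H) (hScard : 1 < S.card) (h0 : H) (h0S : h0 ∈ S)
    (hh0 : mass π S < 2 * π h0)
    (hcov : ∀ r ∈ S, r ≠ h0 → ∃ i ∈ L, q i r ≠ q i h0)
    (i : Fin m)
    (hmax : ∀ j : Fin m, shrink (q j) S (restrict π S) / c j ≤
      shrink (q i) S (restrict π S) / c i) :
    mass π ((S.erase h0).filter fun r => q i r = q i h0) ≤
      mass π (S.erase h0) * Real.exp (-(c i) / (2 * Cs)) := by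
  have hSne : S.Nonempty := Finset.card_pos.mp (by omega)
  have hM : (0:ℝ) < mass π S := mass_pos π hπpos hSne
  set M := mass π S with hMdef
  set B := mass π (S.erase h0) with hBdef
  have hBne : (S.erase h0).Nonempty := by
    obtain ⟨a, ha, b, hb, hab⟩ := Finset.one_lt_card.mp hScard
    rcases eq_or_ne a h0 with rfl | h
    · exact ⟨b, Finset.mem_erase.mpr ⟨hab.symm, hb⟩⟩
    · exact ⟨a, Finset.mem_erase.mpr ⟨h, ha⟩⟩
  have hB : (0:ℝ) < B := mass_pos π hπpos hBne
  -- notation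
  set ag : Fin m → ℝ := fun j => mass π (S.filter fun s => q j s = q j h0) with hagdef
  set dg : Fin m → ℝ := fun j => mass π (S.filter fun s => ¬ q j s = q j h0) with hdgdef
  have hagd : ∀ j, ag j + dg j = M := fun j =>
    Finset.sum_filter_add_sum_filter_not S _ π
  have hag_ge : ∀ j, π h0 ≤ ag j := by
    intro j
    exact Finset.single_le_sum (fun h _ => (hπpos h).le)
      (Finset.mem_filter.mpr ⟨h0S, rfl⟩)
  have hdg_nonneg : ∀ j, 0 ≤ dg j := fun j => mass_nonneg π hπpos _
  -- cover sum bound and existence of a good question on the list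
  have hcover : B ≤ (L.map fun j => dg j).sum := by
    apply cover_sum π hπpos q h0 S L _ (Finset.erase_subset _ _)
    intro r hr
    rw [Finset.mem_erase] at hr
    exact hcov r hr.2 hr.1
  have hLne : L ≠ [] := by
    obtain ⟨r, hr⟩ := hBne
    rw [Finset.mem_erase] at hr
    obtain ⟨j, hj, _⟩ := hcov r hr.2 hr.1
    intro h; rw [h] at hj; simp at hj
  have hjs : ∃ j ∈ L, B * c j ≤ Cs * dg j := by
    by_contra hcon
    push_neg at hcon
    have h1 : (L.map fun j => Cs * dg j).sum < (L.map fun j => B * c j).sum :=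
      list_sum_lt_of_forall_lt _ _ L hLne hcon
    rw [List.sum_map_mul_left, List.sum_map_mul_left] at h1
    have h2 : Cs * B ≤ Cs * (L.map fun j => dg j).sum :=
      mul_le_mul_of_nonneg_left hcover hCs.le
    have h3 : B * (L.map c).sum ≤ B * Cs := mul_le_mul_of_nonneg_left hL hB.le
    linarith
  obtain ⟨js, hjsL, hjs⟩ := hjs
  -- shrink bounds
  have hshr : ∀ j : Fin m, shrink (q j) S (restrict π S) =
      1 - (∑ a : A, (mass π (S.filter fun s => q j s = a)) ^ 2) / M ^ 2 :=
    fun j => shrink_restrict_eq π hπpos S hSne (q j)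
  have hfib : ∀ j : Fin m, ∑ a : A, mass π (S.filter fun s => q j s = a) = M := by
    intro j
    unfold mass
    exact Finset.sum_fiberwise S (q j) π
  have hfilter_nonneg : ∀ (j : Fin m) (a : A),
      0 ≤ mass π (S.filter fun s => q j s = a) := fun j a => mass_nonneg π hπpos _
  -- lower bound for js : shrink js ≥ 2 ag js * dg js / M²
  have hlow : 2 * ag js * dg js / M ^ 2 ≤ shrink (q js) S (restrict π S) := by
    rw [hshr js]
    have hsplitsum : ∑ a : A, (mass π (S.filter fun s => q js s = a)) ^ 2
        = (ag js) ^ 2 + ∑ a ∈ Finset.univ.erase (q js h0),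
            (mass π (S.filter fun s => q js s = a)) ^ 2 := by
      rw [add_comm, Finset.sum_erase_add _ _ (Finset.mem_univ (q js h0))]
    have hrest_sum : ∑ a ∈ Finset.univ.erase (q js h0),
        mass π (S.filter fun s => q js s = a) = dg js := by
      have := Finset.sum_erase_add Finset.univ
        (fun a => mass π (S.filter fun s => q js s = a)) (Finset.mem_univ (q js h0))
      rw [hfib js] at this
      have hd : ag js + dg js = M := hagd js
      simp only [hagdef] at hd ⊢
      linarith
    have hrest_sq : ∑ a ∈ Finset.univ.erase (q js h0),
        (mass π (S.filter fun s => q js s = a)) ^ 2 ≤ (dg js) ^ 2 := by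
      rw [← hrest_sum]
      exact Finset.sum_sq_le_sq_sum_of_nonneg fun a _ => hfilter_nonneg js a
    have hsum_le : ∑ a : A, (mass π (S.filter fun s => q js s = a)) ^ 2
        ≤ (ag js) ^ 2 + (dg js) ^ 2 := by rw [hsplitsum]; linarith
    have hMsq : (0:ℝ) < M ^ 2 := by positivity
    have hMexp : M ^ 2 = (ag js) ^ 2 + 2 * ag js * dg js + (dg js) ^ 2 := by
      rw [← hagd js]; ring
    have h2 : 2 * ag js * dg js ≤ M ^ 2
        - ∑ a : A, (mass π (S.filter fun s => q js s = a)) ^ 2 := by linarith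
    calc 2 * ag js * dg js / M ^ 2
        ≤ (M ^ 2 - ∑ a : A, (mass π (S.filter fun s => q js s = a)) ^ 2) / M ^ 2 := by
          gcongr
      _ = 1 - (∑ a : A, (mass π (S.filter fun s => q js s = a)) ^ 2) / M ^ 2 := by
          rw [sub_div, div_self hMsq.ne']
  -- upper bound for the greedy question i
  have hMsq : (0:ℝ) < M ^ 2 := by positivity
  have hup : shrink (q i) S (restrict π S) ≤ 1 - (ag i) ^ 2 / M ^ 2 := by
    rw [hshr i]
    have h1 : (ag i) ^ 2 ≤ ∑ a : A, (mass π (S.filter fun s => q i s = a)) ^ 2 :=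
      Finset.single_le_sum (f := fun a => (mass π (S.filter fun s => q i s = a)) ^ 2)
        (fun a _ => sq_nonneg _) (Finset.mem_univ (q i h0))
    have h2 : (ag i) ^ 2 / M ^ 2
        ≤ (∑ a : A, (mass π (S.filter fun s => q i s = a)) ^ 2) / M ^ 2 := by gcongr
    linarith
  -- main key inequality
  have hkey : B * c i ≤ 2 * Cs * dg i := by
    have hA3 : shrink (q js) S (restrict π S) * c i
        ≤ shrink (q i) S (restrict π S) * c js := by
      have h := hmax js
      rwa [div_le_div_iff₀ (hc js) (hc i)] at h
    have h5 : dg js / M ≤ shrink (q js) S (restrict π S) := by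
      have hMag : M ≤ 2 * ag js := by linarith [hag_ge js]
      have hnum : M * dg js ≤ 2 * ag js * dg js :=
        mul_le_mul_of_nonneg_right hMag (hdg_nonneg js)
      calc dg js / M = M * dg js / M ^ 2 := by
            rw [pow_two, mul_div_mul_left _ _ hM.ne']
        _ ≤ 2 * ag js * dg js / M ^ 2 := by gcongr
        _ ≤ _ := hlow
    have h6 : shrink (q i) S (restrict π S) ≤ 2 * dg i / M := by
      have hag_eq : ag i = M - dg i := by linarith [hagd i]
      have hnum : M ^ 2 - (ag i) ^ 2 ≤ 2 * dg i * M := by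
        rw [hag_eq]; nlinarith [sq_nonneg (dg i)]
      have e : 1 - (ag i) ^ 2 / M ^ 2 = (M ^ 2 - (ag i) ^ 2) / M ^ 2 := by
        rw [sub_div, div_self hMsq.ne']
      calc shrink (q i) S (restrict π S) ≤ 1 - (ag i) ^ 2 / M ^ 2 := hup
        _ = (M ^ 2 - (ag i) ^ 2) / M ^ 2 := e
        _ ≤ 2 * dg i * M / M ^ 2 := by gcongr
        _ = 2 * dg i / M := by
            rw [pow_two, mul_comm M M, mul_div_mul_right _ _ hM.ne']
    have h7 : dg js / M * c i ≤ 2 * dg i / M * c js :=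
      calc dg js / M * c i ≤ shrink (q js) S (restrict π S) * c i :=
            mul_le_mul_of_nonneg_right h5 (hc i).le
        _ ≤ shrink (q i) S (restrict π S) * c js := hA3
        _ ≤ 2 * dg i / M * c js := mul_le_mul_of_nonneg_right h6 (hc js).le
    have h8 : dg js * c i ≤ 2 * dg i * c js := by
      rw [div_mul_eq_mul_div, div_mul_eq_mul_div, div_le_div_iff₀ hM hM] at h7
      exact le_of_mul_le_mul_right (by nlinarith [h7]) hM
    have h9 : B * c i * c js ≤ 2 * Cs * dg i * c js := by
      nlinarith [mul_le_mul_of_nonneg_right hjs (hc i).le,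
        mul_le_mul_of_nonneg_left h8 hCs.le]
    exact le_of_mul_le_mul_right (by nlinarith [h9]) (hc js)
  -- put it together
  have hpart : mass π ((S.erase h0).filter fun r => q i r = q i h0) + dg i = B := by
    have h1 : (S.erase h0).filter (fun s => ¬ q i s = q i h0)
        = S.filter fun s => ¬ q i s = q i h0 := by
      rw [Finset.filter_erase]
      exact Finset.erase_eq_of_notMem (by simp)
    have h2 := Finset.sum_filter_add_sum_filter_not (S.erase h0)
      (fun s => q i s = q i h0) π
    rw [h1] at h2
    exact h2
  have h2Cs : (0:ℝ) < 2 * Cs := by linarith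
  have hexp : 1 - c i / (2 * Cs) ≤ Real.exp (-(c i) / (2 * Cs)) := by
    have h := Real.add_one_le_exp (-(c i) / (2 * Cs))
    rw [neg_div] at h ⊢
    linarith
  have hdgi : B * (c i / (2 * Cs)) ≤ dg i := by
    rw [mul_div_assoc'] ; rw [div_le_iff₀ h2Cs]
    nlinarith [hkey]
  calc mass π ((S.erase h0).filter fun r => q i r = q i h0)
      = B - dg i := by linarith [hpart]
    _ ≤ B * (1 - c i / (2 * Cs)) := by nlinarith [hdgi]
    _ ≤ B * Real.exp (-(c i) / (2 * Cs)) := mul_le_mul_of_nonneg_left hexp hB.le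

lemma pathCost_nonneg (q : Fin m → H → A) (c : Fin m → ℝ) (hc : ∀ i, 0 < c i) :
    ∀ (T : QTree m H A) (h : H), 0 ≤ pathCost q c T h := by
  intro T
  induction T with
  | leaf h' => intro h; simp [pathCost]
  | node i ch ih =>
    intro h
    simp only [pathCost]
    have := ih (q i h) h
    linarith [hc i]

lemma pathCost_eq_sum (q : Fin m → H → A) (c : Fin m → ℝ) :
    ∀ (T : QTree m H A) (h : H),
      pathCost q c T h = ((pathQs q T h).map c).sum := by
  intro T
  induction T with
  | leaf h' => intro h; simp [pathCost, pathQs]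
  | node i ch ih =>
    intro h
    simp only [pathCost, pathQs, List.map_cons, List.sum_cons]
    rw [ih (q i h) h]

lemma follow_diverge (q : Fin m → H → A) (h0 : H) :
    ∀ (T : QTree m H A) (r : H), follow q T r = r → follow q T h0 = h0 →
      r ≠ h0 → ∃ i ∈ pathQs q T h0, q i r ≠ q i h0 := by
  intro T
  induction T with
  | leaf h' =>
    intro r hr hh0 hne
    simp only [follow] at hr hh0
    exact absurd (hr.symm.trans hh0) hne
  | node i ch ih =>
    intro r hr hh0 hne
    by_cases hq : q i r = q i h0
    · simp only [follow] at hr hh0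
      rw [hq] at hr
      obtain ⟨j, hj, hjne⟩ := ih (q i h0) r hr hh0 hne
      exact ⟨j, by simp [pathQs, hj], hjne⟩
    · exact ⟨i, by simp [pathQs], hq⟩

lemma aux_decay (π : H → ℝ) (hπpos : ∀ h, 0 < π h)
    (q : Fin m → H → A) (c : Fin m → ℝ) (hc : ∀ i, 0 < c i)
    (Cs : ℝ) (hCs : 0 < Cs) (L : List (Fin m)) (hL : (L.map c).sum ≤ Cs)
    (Tg : QTree m H A) (S : Finset H) (hTg : IsGreedy q c π Tg S) :
    ∀ h0 ∈ S, (∀ r ∈ S, r ≠ h0 → ∃ i ∈ L, q i r ≠ q i h0) →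
      mass π S < 2 * π h0 → ∀ d : ℕ,
      mass π ((S.erase h0).filter fun r =>
          ∀ i ∈ (pathQs q Tg h0).take d, q i r = q i h0) ≤
        mass π (S.erase h0) *
          Real.exp (-(((pathQs q Tg h0).take d).map c).sum / (2 * Cs)) := by
  induction hTg with
  | leaf h =>
    intro h0 h0S _ _ d
    simp only [pathQs, List.take_nil, List.map_nil, List.sum_nil, neg_zero, zero_div,
      Real.exp_zero, mul_one, List.not_mem_nil, false_implies, implies_true]
    rw [Finset.filter_true_of_mem (by intro x _; simp)]
  | node S i ch hcard hmax hch ih =>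
    intro h0 h0S hcov hh0 d
    match d with
    | 0 =>
      simp only [List.take_zero, List.map_nil, List.sum_nil, neg_zero, zero_div,
        Real.exp_zero, mul_one, List.not_mem_nil, false_implies, implies_true]
      rw [Finset.filter_true_of_mem (by intro x _; simp)]
    | d + 1 =>
      have hpath : pathQs q (QTree.node i ch) h0 = i :: pathQs q (ch (q i h0)) h0 := rfl
      set V := S.filter (fun s => q i s = q i h0) with hVdef
      have hVne : V.Nonempty := ⟨h0, Finset.mem_filter.mpr ⟨h0S, rfl⟩⟩
      have h0V : h0 ∈ V := Finset.mem_filter.mpr ⟨h0S, rfl⟩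
      have hVS : V ⊆ S := Finset.filter_subset _ _
      have hcov' : ∀ r ∈ V, r ≠ h0 → ∃ j ∈ L, q j r ≠ q j h0 :=
        fun r hr => hcov r (hVS hr)
      have hh0' : mass π V < 2 * π h0 :=
        lt_of_le_of_lt (mass_mono π hπpos hVS) hh0
      have hIH := ih (q i h0) hVne h0 h0V hcov' hh0' d
      have hstep := one_step π hπpos q c hc Cs hCs L hL S hcard h0 h0S hh0 hcov i hmax
      have hVerase : V.erase h0 = (S.erase h0).filter fun r => q i r = q i h0 := by
        rw [hVdef, ← Finset.filter_erase]
      have hsets : ((S.erase h0).filter fun r =>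
          ∀ j ∈ (pathQs q (QTree.node i ch) h0).take (d+1), q j r = q j h0)
          = (V.erase h0).filter fun r =>
            ∀ j ∈ (pathQs q (ch (q i h0)) h0).take d, q j r = q j h0 := by
        rw [hpath, List.take_succ_cons, hVerase, Finset.filter_filter]
        apply Finset.filter_congr
        intro x hx
        simp [List.forall_mem_cons, and_comm]
      rw [hsets, hpath, List.take_succ_cons, List.map_cons, List.sum_cons]
      have hexp2 : (0:ℝ) ≤ Real.exp
          (-(((pathQs q (ch (q i h0)) h0).take d).map c).sum / (2 * Cs)) :=
        (Real.exp_pos _).le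
      have hmass2 : mass π (V.erase h0) ≤
          mass π (S.erase h0) * Real.exp (-(c i) / (2 * Cs)) := by
        rw [hVerase]; exact hstep
      calc mass π ((V.erase h0).filter fun r =>
              ∀ j ∈ (pathQs q (ch (q i h0)) h0).take d, q j r = q j h0)
          ≤ mass π (V.erase h0) *
            Real.exp (-(((pathQs q (ch (q i h0)) h0).take d).map c).sum / (2 * Cs)) := hIH
        _ ≤ (mass π (S.erase h0) * Real.exp (-(c i) / (2 * Cs))) *
            Real.exp (-(((pathQs q (ch (q i h0)) h0).take d).map c).sum / (2 * Cs)) :=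
            mul_le_mul_of_nonneg_right hmass2 hexp2
        _ = mass π (S.erase h0) *
            Real.exp (-(c i + (((pathQs q (ch (q i h0)) h0).take d).map c).sum) / (2 * Cs)) := by
            rw [mul_assoc, ← Real.exp_add]
            congr 2
            rw [neg_add, add_div, neg_div, neg_div]

end Aux

/-- Along the root-to-`h_0` path of the greedy subtree `T^g_S`
(questions `q_0, …, q_{D−1}`, prefix costs `C_d`, surviving sets
`R_d = R_0 ∩ {r : r agrees with h_0 on the first d questions}` where `R_0 = S \ {h_0}`),
for every `0 ≤ d < D`, `π(R_d) ≤ π(R_0) · exp( −C_d / (2 · C*(h_0)) )`. -/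
theorem greedy_mass_decay [Fintype H] [Fintype A] [DecidableEq H] [DecidableEq A]
    (π : H → ℝ) (hπpos : ∀ h, 0 < π h) (hπsum : ∑ h : H, π h = 1)
    (hH : 1 < Fintype.card H)
    (q : Fin m → H → A) (c : Fin m → ℝ) (hc : ∀ i, 0 < c i)
    (hdist : ∀ h h' : H, h ≠ h' → ∃ i : Fin m, q i h ≠ q i h')
    (S : Finset H) (hS : 1 < S.card)
    (h0 : H) (h0S : h0 ∈ S) (hh0 : 1 / 2 < restrict π S h0)
    (Tg : QTree m H A) (hTg : IsGreedy q c π Tg S)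
    (Tstar : QTree m H A) (hTstar : ValidOn q Tstar S) :
    ∀ d : ℕ, d < (pathQs q Tg h0).length →
      mass π ((S.erase h0).filter fun r =>
          ∀ i ∈ (pathQs q Tg h0).take d, q i r = q i h0) ≤
        mass π (S.erase h0) *
          Real.exp (-(((pathQs q Tg h0).take d).map c).sum /
            (2 * pathCost q c Tstar h0)) := by
  intro d _
  have hM : 0 < mass π S := mass_pos π hπpos ⟨h0, h0S⟩
  have hh0' : mass π S < 2 * π h0 := by
    simp only [restrict, if_pos h0S] at hh0
    rw [lt_div_iff₀ hM] at hh0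
    linarith
  obtain ⟨s, hs, t, ht, hst⟩ := Finset.one_lt_card.mp hS
  have hCs : 0 < pathCost q c Tstar h0 := by
    cases Tstar with
    | leaf h' =>
      have h1 : h' = s := hTstar s hs
      have h2 : h' = t := hTstar t ht
      exact absurd (h1.symm.trans h2) hst
    | node i ch =>
      have := pathCost_nonneg q c hc (ch (q i h0)) h0
      simp only [pathCost]
      linarith [hc i]
  have hcov : ∀ r ∈ S, r ≠ h0 → ∃ i ∈ pathQs q Tstar h0, q i r ≠ q i h0 :=
    fun r hr hne => follow_diverge q h0 Tstar r (hTstar r hr) (hTstar h0 h0S) hne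
  have hL : ((pathQs q Tstar h0).map c).sum ≤ pathCost q c Tstar h0 :=
    le_of_eq (pathCost_eq_sum q c Tstar h0).symm
  exact aux_decay π hπpos q c hc _ hCs _ hL Tg S hTg h0 h0S hcov hh0' d
end ActiveLearning
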